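/- arXiv:2411.13116 — 4 statements merged into one kernel-verified Lean document; each statement's English description precedes it below -/
import Mathlib

section
/- Let T be a finite binary tree with a real-valued node labeling L and B-values defined by the recursion, and let Q be a real number. Suppose there exists a root-to-leaf path in T such that every node v on that path satisfies L(v) ≤ Q, and let w be the leaf reached by a min-B traverse path. Then L(w) ≤ Q. -/
/-- A finite binary tree: every internal node has exactly two children, and
every node carries a label of type `α`. -/
inductive BTree (α : Type) : Type
  | leaf (a : α) : BTree α
  | node (a : α) (l r : BTree α) : BTree α

namespace BTree

variable {α : Type}

/-- The `B`-values defined by the recursion `B(v) = L(v)` at a leaf and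
`B(v) = max(L(v), min(B(left child), B(right child)))` at an internal node. -/
noncomputable def Bval (L : α → ℝ) : BTree α → ℝ
  | leaf a => L a
  | node a l r => max (L a) (min (Bval L l) (Bval L r))

/-- There exists a root-to-leaf path all of whose nodes satisfy `p`. -/
def ExistsPath (p : α → Prop) : BTree α → Prop
  | leaf a => p a
  | node a l r => p a ∧ (ExistsPath p l ∨ ExistsPath p r)

/-- `MinBLeaf L t w` : `w` is (the label of) a leaf reached by a min-`B`
traverse path, i.e. a root-to-leaf path which, at every internal node,
continues to a child whose `B`-value is at most that of the other child. -/
def MinBLeaf (L : α → ℝ) : BTree α → α → Prop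
  | leaf a, w => w = a
  | node _ l r, w =>
      (Bval L l ≤ Bval L r ∧ MinBLeaf L l w) ∨ (Bval L r ≤ Bval L l ∧ MinBLeaf L r w)

end BTree

lemma aux_bval_le {α : Type} (L : α → ℝ) (Q : ℝ) :
    ∀ t : BTree α, t.ExistsPath (fun a => L a ≤ Q) → t.Bval L ≤ Q
  | BTree.leaf a, h => h
  | BTree.node a l r, ⟨ha, h⟩ => by
    simp only [BTree.Bval, max_le_iff]
    refine ⟨ha, ?_⟩
    rcases h with h | h
    · exact le_trans (min_le_left _ _) (aux_bval_le L Q l h)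
    · exact le_trans (min_le_right _ _) (aux_bval_le L Q r h)

lemma aux_leaf_le {α : Type} (L : α → ℝ) :
    ∀ (t : BTree α) (w : α), BTree.MinBLeaf L t w → L w ≤ t.Bval L
  | BTree.leaf a, w, h => by subst h; exact le_refl _
  | BTree.node a l r, w, h => by
    simp only [BTree.Bval]
    rcases h with ⟨hle, h⟩ | ⟨hle, h⟩
    · exact le_max_of_le_right (le_min (aux_leaf_le L l w h)
        (le_trans (aux_leaf_le L l w h) hle))
    · exact le_max_of_le_right (le_min (le_trans (aux_leaf_le L r w h) hle)
        (aux_leaf_le L r w h))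

/-- Let `T` be a finite binary tree with a real-valued node labeling `L` and
`B`-values defined by the recursion, and let `Q` be a real number.  Suppose
there exists a root-to-leaf path in `T` such that every node `v` on that path
satisfies `L(v) ≤ Q`, and let `w` be the leaf reached by a min-`B` traverse
path.  Then `L(w) ≤ Q`. -/
theorem stmt_7 {α : Type} (L : α → ℝ) (Q : ℝ) (t : BTree α)
    (hpath : t.ExistsPath (fun a => L a ≤ Q))
    (w : α) (hw : BTree.MinBLeaf L t w) :
    L w ≤ Q := by
  exact le_trans (aux_leaf_le L t w hw) (aux_bval_le L Q t hpath)
end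

section
/- Let H and h be positive integers with h ≤ H, let ν₁ > 0, ρ ∈ (0,1), let M be a positive integer, δ₁ ∈ (0,1), and set c = ((H−h+1)²/ν₁²)·ln(6MH/δ₁). If K is a real number and D_m ≥ 1 is an integer such that K ≥ Σ_{D=1}^{D_m−1} (2ρ⁻²)^D · (c/2), then 2^{D_m + 1} − 1 ≤ 4·( K·(2−ρ²)/c + 1 )^{log_{2ρ⁻²} 2}. -/
/-- Let `H` and `h` be positive integers with `h ≤ H`, let `ν₁ > 0`,
`ρ ∈ (0,1)`, let `M` be a positive integer, `δ₁ ∈ (0,1)`, and set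
`c = ((H−h+1)²/ν₁²)·ln(6MH/δ₁)`.  If `K` is a real number and `D_m ≥ 1` is an
integer such that `K ≥ Σ_{D=1}^{D_m−1} (2ρ⁻²)^D · (c/2)`, then
`2^{D_m + 1} − 1 ≤ 4·( K·(2−ρ²)/c + 1 )^{log_{2ρ⁻²} 2}`. -/
theorem stmt_9 (H h : ℕ) (hh : 1 ≤ h) (hhH : h ≤ H)
    (ν₁ : ℝ) (hν : 0 < ν₁) (ρ : ℝ) (hρ0 : 0 < ρ) (hρ1 : ρ < 1)
    (M : ℕ) (hM : 1 ≤ M) (δ₁ : ℝ) (hδ0 : 0 < δ₁) (hδ1 : δ₁ < 1)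
    (c : ℝ) (hc : c = (((H : ℝ) - (h : ℝ) + 1) ^ 2 / ν₁ ^ 2) * Real.log (6 * M * H / δ₁))
    (K : ℝ) (Dm : ℕ) (hDm : 1 ≤ Dm)
    (hK : K ≥ ∑ D ∈ Finset.Icc 1 (Dm - 1), (2 / ρ ^ 2) ^ D * (c / 2)) :
    (2 : ℝ) ^ (Dm + 1) - 1 ≤
      4 * (K * (2 - ρ ^ 2) / c + 1) ^ (Real.logb (2 / ρ ^ 2) 2) := by
  set b : ℝ := 2 / ρ ^ 2 with hbdef
  have hρ2 : 0 < ρ ^ 2 := by positivity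
  have hρ2' : ρ ^ 2 < 1 := by nlinarith
  have hb1 : (1 : ℝ) < b := by
    rw [hbdef, lt_div_iff₀ hρ2]; nlinarith
  have hb0 : (0 : ℝ) < b := lt_trans one_pos hb1
  -- c > 0
  have hH1 : (1 : ℝ) ≤ (H : ℝ) := by
    exact_mod_cast le_trans hh hhH
  have hM1 : (1 : ℝ) ≤ (M : ℝ) := by exact_mod_cast hM
  have hhle : (h : ℝ) ≤ (H : ℝ) := by exact_mod_cast hhH
  have hlogpos : 0 < Real.log (6 * M * H / δ₁) := by
    apply Real.log_pos
    rw [lt_div_iff₀ hδ0]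
    nlinarith
  have hc0 : 0 < c := by
    rw [hc]
    apply mul_pos _ hlogpos
    apply div_pos _ (by positivity)
    nlinarith
  have h2ρ : 0 < 2 - ρ ^ 2 := by nlinarith
  set n : ℕ := Dm - 1 with hn
  have hDmn : Dm = n + 1 := by omega
  -- sum value
  have hsum : ∑ D ∈ Finset.Icc 1 n, b ^ D * (c / 2)
      = b * ((b ^ n - 1) / (b - 1)) * (c / 2) := by
    rw [← Finset.sum_mul]
    congr 1
    rw [show Finset.Icc 1 n = Finset.Ico 1 (n+1) by rw [Finset.Ico_add_one_right_eq_Icc],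
      Finset.sum_Ico_eq_sum_range]
    simp only [Nat.add_sub_cancel]
    have : ∀ i, b ^ (1 + i) = b * b ^ i := fun i => by ring
    simp_rw [this, ← Finset.mul_sum, geom_sum_eq hb1.ne']
  -- key inequality : X ≥ b ^ n
  have hkey : b ^ n ≤ K * (2 - ρ ^ 2) / c + 1 := by
    have hKs : b * ((b ^ n - 1) / (b - 1)) * (c / 2) ≤ K := by
      rw [← hsum]; exact hK
    have hb1' : b - 1 = (2 - ρ ^ 2) / ρ ^ 2 := by
      rw [hbdef]; field_simp
    have hs' : (b ^ n - 1) * (c / (2 - ρ ^ 2)) ≤ K := by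
      have : b * ((b ^ n - 1) / (b - 1)) * (c / 2)
          = (b ^ n - 1) * (c / (2 - ρ ^ 2)) := by
        rw [hb1', hbdef]
        field_simp
      linarith [this ▸ hKs]
    have : b ^ n - 1 ≤ K * (2 - ρ ^ 2) / c := by
      rw [le_div_iff₀ hc0]
      calc (b ^ n - 1) * c = (b ^ n - 1) * (c / (2 - ρ ^ 2)) * (2 - ρ ^ 2) := by
            field_simp
        _ ≤ K * (2 - ρ ^ 2) := by
            apply mul_le_mul_of_nonneg_right hs' (le_of_lt h2ρ)
    linarith
  -- take rpow
  have hL : 0 < Real.logb b 2 := Real.logb_pos hb1 one_lt_two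
  have hbn : (0:ℝ) ≤ b ^ n := by positivity
  have hmono : (b ^ n : ℝ) ^ (Real.logb b 2)
      ≤ (K * (2 - ρ ^ 2) / c + 1) ^ (Real.logb b 2) :=
    Real.rpow_le_rpow hbn hkey hL.le
  have hcalc : (b ^ n : ℝ) ^ (Real.logb b 2) = 2 ^ n := by
    rw [← Real.rpow_natCast b n, ← Real.rpow_mul hb0.le, mul_comm,
      Real.rpow_mul hb0.le, Real.rpow_logb hb0 hb1.ne' two_pos,
      Real.rpow_natCast]
  have h2n : (2:ℝ) ^ (Dm + 1) = 4 * 2 ^ n := by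
    rw [hDmn]; ring
  rw [h2n]
  rw [hcalc] at hmono
  linarith [hmono]
end

section
/- Let ρ ∈ (0,1) and c > 0 be real numbers, and let K be a real number and h_m ≥ 1 an integer such that K ≥ (c/2)·Σ_{D=1}^{h_m−1} ρ^{−2D}. Then h_m ≤ log_{ρ⁻²}( 2K(1−ρ²)/c + 1 ) + 1. -/
lemma geom_id (ρ : ℝ) (hρ : ρ ≠ 0) (n : ℕ) :
    (1 - ρ ^ 2) * ∑ D ∈ Finset.Icc 1 n, (1 / ρ ^ 2) ^ D = (1 / ρ ^ 2) ^ n - 1 := by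
  induction n with
  | zero => simp
  | succ k ih =>
    rw [Finset.sum_Icc_succ_top (by omega)]
    have hbk : ρ ^ 2 * (1 / ρ ^ 2) ^ (k + 1) = (1 / ρ ^ 2) ^ k := by
      rw [pow_succ (1 / ρ ^ 2) k, mul_comm, mul_assoc, one_div, inv_mul_cancel₀ (pow_ne_zero 2 hρ), mul_one]
    rw [mul_add, ih]
    ring_nf
    ring_nf at hbk
    linarith

/-- Let `ρ ∈ (0,1)` and `c > 0` be real numbers, and let `K` be a real number
and `h_m ≥ 1` an integer such that `K ≥ (c/2)·Σ_{D=1}^{h_m−1} ρ^{−2D}`.  Then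
`h_m ≤ log_{ρ⁻²}( 2K(1−ρ²)/c + 1 ) + 1`. -/
theorem stmt_10 (ρ : ℝ) (hρ0 : 0 < ρ) (hρ1 : ρ < 1) (c : ℝ) (hc : 0 < c)
    (K : ℝ) (hm : ℕ) (hhm : 1 ≤ hm)
    (hK : K ≥ (c / 2) * ∑ D ∈ Finset.Icc 1 (hm - 1), (1 / ρ ^ 2) ^ D) :
    (hm : ℝ) ≤ Real.logb (1 / ρ ^ 2) (2 * K * (1 - ρ ^ 2) / c + 1) + 1 := by
  set n := hm - 1 with hn
  set b : ℝ := 1 / ρ ^ 2 with hb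
  have hρ2 : ρ ^ 2 < 1 := by nlinarith
  have hρ2pos : 0 < ρ ^ 2 := by positivity
  have hb1 : 1 < b := by
    rw [hb, lt_div_iff₀ hρ2pos]; linarith
  have hgeom := geom_id ρ (ne_of_gt hρ0) n
  have hS : ∑ D ∈ Finset.Icc 1 n, b ^ D ≤ 2 * K / c := by
    rw [le_div_iff₀ hc]; nlinarith [hK]
  have hkey : b ^ n ≤ 2 * K * (1 - ρ ^ 2) / c + 1 := by
    have h1 : (1 - ρ ^ 2) * ∑ D ∈ Finset.Icc 1 n, b ^ D ≤ (1 - ρ ^ 2) * (2 * K / c) := by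
      apply mul_le_mul_of_nonneg_left hS (by linarith)
    rw [hgeom] at h1
    have h2 : (1 - ρ ^ 2) * (2 * K / c) = 2 * K * (1 - ρ ^ 2) / c := by ring
    linarith [h2 ▸ h1]
  have hlog : (n : ℝ) ≤ Real.logb b (2 * K * (1 - ρ ^ 2) / c + 1) := by
    have hbn : (0:ℝ) < b ^ n := by positivity
    have := Real.logb_le_logb_of_le hb1 hbn hkey
    rwa [Real.logb_pow, Real.logb_self_eq_one hb1, mul_one] at this
  have hcast : (hm : ℝ) = (n : ℝ) + 1 := by
    rw [hn]; push_cast [Nat.cast_sub hhm]; ring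
  linarith [hlog]
end

section
/- Let (Ω, F, P) be a probability space equipped with a filtration (F_k)_{k=0}^{K}, and let Z_1, …, Z_K be random variables such that each Z_k is F_k-measurable and satisfies 0 ≤ Z_k ≤ B almost surely, for a constant B ≥ 1. Let δ ∈ (0,1) and let R be a constant with R ≥ (4/9)·ln(1/δ) such that Σ_{k=1}^{K} E[Z_k | F_{k−1}] ≤ R almost surely. Then P( Σ_{k=1}^{K} Z_k > R + 2B·√(R·ln(1/δ)) ) ≤ δ. -/
open MeasureTheory


lemma myExpQuad {x : ℝ} (h0 : 0 ≤ x) (h1 : x ≤ 3/2) : Real.exp x ≤ 1 + x + x ^ 2 := by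
  have h2 : Real.exp (x/2) ≤ (∑ m ∈ Finset.range 3, (x/2) ^ m / m.factorial) +
      (x/2) ^ 3 * (3 + 1) / (Nat.factorial 3 * 3) :=
    Real.exp_bound' (by linarith) (by linarith) (by norm_num)
  have hs : (∑ m ∈ Finset.range 3, (x/2) ^ m / m.factorial)
      = 1 + x/2 + (x/2)^2/2 := by
    simp [Finset.sum_range_succ, Nat.factorial]
  rw [hs] at h2
  have key : Real.exp (x/2) ≤ 1 + x/2 + x^2/8 + x^3/36 := by
    refine h2.trans (le_of_eq ?_)
    norm_num [Nat.factorial]; ring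
  have h3 : Real.exp x = Real.exp (x/2) * Real.exp (x/2) := by
    rw [← Real.exp_add]; ring_nf
  have hp : (0:ℝ) < Real.exp (x/2) := Real.exp_pos _
  have hq : (0:ℝ) ≤ 1 + x/2 + x^2/8 + x^3/36 := by positivity
  have h4 : Real.exp (x/2) * Real.exp (x/2) ≤ (1 + x/2 + x^2/8 + x^3/36)^2 := by
    rw [sq]; exact mul_le_mul key key hp.le hq
  rw [h3]
  refine h4.trans ?_
  nlinarith [mul_nonneg (mul_nonneg h0 h0) h0, mul_nonneg h0 h0,
    mul_nonneg (mul_nonneg (mul_nonneg h0 h0) h0) h0,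
    mul_nonneg (mul_nonneg (mul_nonneg (mul_nonneg h0 h0) h0) h0) h0,
    mul_nonneg (mul_nonneg h0 h0) (sub_nonneg.2 h1),
    mul_nonneg (mul_nonneg (mul_nonneg h0 h0) h0) (sub_nonneg.2 h1),
    mul_nonneg (mul_nonneg (mul_nonneg (mul_nonneg h0 h0) h0) h0) (sub_nonneg.2 h1)]

lemma myChord {B lam z : ℝ} (hB : 0 < B) (hz0 : 0 ≤ z) (hzB : z ≤ B) :
    Real.exp (lam * z) ≤ 1 + (Real.exp (lam * B) - 1) / B * z := by
  have ha : (0:ℝ) ≤ 1 - z / B := by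
    rw [sub_nonneg]; exact div_le_one_of_le₀ hzB hB.le
  have hb : (0:ℝ) ≤ z / B := div_nonneg hz0 hB.le
  have hab : (1 - z / B) + z / B = 1 := by ring
  have h := convexOn_exp.2 (Set.mem_univ (0:ℝ)) (Set.mem_univ (lam * B)) ha hb hab
  simp only [smul_eq_mul, mul_zero, zero_add, Real.exp_zero, mul_one] at h
  have hz : (1 - z / B) * (lam * B) * 0 = 0 := by ring
  have hzz : z / B * (lam * B) = lam * z := by field_simp
  rw [hzz] at h
  calc Real.exp (lam * z) ≤ (1 - z / B) + z / B * Real.exp (lam * B) := h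
    _ = 1 + (Real.exp (lam * B) - 1) / B * z := by field_simp; ring

lemma myIntegrableOfBound {Ω : Type*} {m0 : MeasurableSpace Ω} {P : Measure Ω}
    [IsProbabilityMeasure P] {f : Ω → ℝ} (hf : AEStronglyMeasurable f P) (C : ℝ)
    (h : ∀ᵐ ω ∂P, ‖f ω‖ ≤ C) : Integrable f P :=
  (memLp_top_of_bound hf C h).integrable le_top

lemma myStep {Ω : Type*} {m0 : MeasurableSpace Ω} (P : Measure Ω)
    [IsProbabilityMeasure P] {m : MeasurableSpace Ω} (hm : m ≤ m0)
    {W Z : Ω → ℝ} (hW : StronglyMeasurable[m] W)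
    {CW : ℝ} (hCW : 0 ≤ CW) (hW0 : 0 ≤ᵐ[P] W) (hWb : ∀ᵐ ω ∂P, W ω ≤ CW)
    (hZm : AEStronglyMeasurable[m0] Z P) {B lam : ℝ} (hB : 0 < B) (hlam : 0 ≤ lam)
    (hZ01 : ∀ᵐ ω ∂P, 0 ≤ Z ω ∧ Z ω ≤ B) :
    ∫ ω, W ω * Real.exp (lam * Z ω) ∂P
      ≤ ∫ ω, W ω * Real.exp ((Real.exp (lam * B) - 1) / B * (P[Z|m]) ω) ∂P := by
  set c : ℝ := (Real.exp (lam * B) - 1) / B with hc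
  have hc0 : 0 ≤ c := by
    have := Real.add_one_le_exp (lam * B)
    apply div_nonneg _ hB.le
    linarith [mul_nonneg hlam hB.le]
  set μZ : Ω → ℝ := P[Z|m] with hμZ
  -- basic facts
  have hWm0 : AEStronglyMeasurable[m0] W P := (hW.mono hm).aestronglyMeasurable
  have hZint : Integrable Z P := by
    apply myIntegrableOfBound hZm B
    filter_upwards [hZ01] with ω h
    rw [Real.norm_eq_abs, abs_le]; constructor <;> linarith [h.1, h.2]
  have hμ0 : 0 ≤ᵐ[P] μZ := condExp_nonneg (by filter_upwards [hZ01] with ω h using h.1)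
  have hμB : ∀ᵐ ω ∂P, μZ ω ≤ B := by
    have h1 : μZ ≤ᵐ[P] P[fun _ => B|m] :=
      condExp_mono hZint (integrable_const B)
        (by filter_upwards [hZ01] with ω h using h.2)
    have h2 := condExp_const (μ := P) hm B
    filter_upwards [h1] with ω ha
    calc μZ ω ≤ (P[fun _ => B|m]) ω := ha
      _ = B := by rw [h2]
  have hμm : AEStronglyMeasurable[m0] μZ P :=
    (stronglyMeasurable_condExp.mono hm).aestronglyMeasurable
  have hWint : Integrable W P := by
    apply myIntegrableOfBound hWm0 CW
    filter_upwards [hW0, hWb] with ω h0 hb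
    rwa [Real.norm_eq_abs, abs_of_nonneg h0]
  -- integrability of all the players
  have hint1 : Integrable (fun ω => W ω * Real.exp (lam * Z ω)) P := by
    apply myIntegrableOfBound (hWm0.mul (Real.continuous_exp.comp_aestronglyMeasurable
      (aestronglyMeasurable_const.mul hZm))) (CW * Real.exp (lam * B))
    filter_upwards [hW0, hWb, hZ01] with ω h0 hb hz
    calc ‖W ω * Real.exp (lam * Z ω)‖ = W ω * Real.exp (lam * Z ω) := by
          rw [Real.norm_eq_abs, abs_of_nonneg (mul_nonneg h0 (Real.exp_pos _).le)]
      _ ≤ CW * Real.exp (lam * B) :=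
          mul_le_mul hb (Real.exp_le_exp.2 (mul_le_mul_of_nonneg_left hz.2 hlam))
            (Real.exp_pos _).le hCW
  have hintWZ : Integrable (fun ω => W ω * Z ω) P := by
    apply myIntegrableOfBound (hWm0.mul hZm) (CW * B)
    filter_upwards [hW0, hWb, hZ01] with ω h0 hb hz
    calc ‖W ω * Z ω‖ = W ω * Z ω := by
          rw [Real.norm_eq_abs, abs_of_nonneg (mul_nonneg h0 hz.1)]
      _ ≤ CW * B := mul_le_mul hb hz.2 hz.1 hCW
  have hintWμ : Integrable (fun ω => W ω * μZ ω) P := by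
    apply myIntegrableOfBound (hWm0.mul hμm) (CW * B)
    filter_upwards [hW0, hWb, hμ0, hμB] with ω h0 hb hm0 hmB
    calc ‖W ω * μZ ω‖ = W ω * μZ ω := by
          rw [Real.norm_eq_abs, abs_of_nonneg (mul_nonneg h0 hm0)]
      _ ≤ CW * B := mul_le_mul hb hmB hm0 hCW
  have hint4 : Integrable (fun ω => W ω * Real.exp (c * μZ ω)) P := by
    apply myIntegrableOfBound (hWm0.mul (Real.continuous_exp.comp_aestronglyMeasurable
      (aestronglyMeasurable_const.mul hμm))) (CW * Real.exp (c * B))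
    filter_upwards [hW0, hWb, hμ0, hμB] with ω h0 hb hm0 hmB
    calc ‖W ω * Real.exp (c * μZ ω)‖ = W ω * Real.exp (c * μZ ω) := by
          rw [Real.norm_eq_abs, abs_of_nonneg (mul_nonneg h0 (Real.exp_pos _).le)]
      _ ≤ CW * Real.exp (c * B) :=
          mul_le_mul hb (Real.exp_le_exp.2 (mul_le_mul_of_nonneg_left hmB hc0))
            (Real.exp_pos _).le hCW
  have hint2 : Integrable (fun ω => W ω * (1 + c * Z ω)) P := by
    apply myIntegrableOfBound (hWm0.mul (aestronglyMeasurable_const.add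
      (aestronglyMeasurable_const.mul hZm))) (CW * (1 + c * B))
    filter_upwards [hW0, hWb, hZ01] with ω h0 hb hz
    have h1 : (0:ℝ) ≤ 1 + c * Z ω := by
      have := mul_nonneg hc0 hz.1; linarith
    calc ‖W ω * (1 + c * Z ω)‖ = W ω * (1 + c * Z ω) := by
          rw [Real.norm_eq_abs, abs_of_nonneg (mul_nonneg h0 h1)]
      _ ≤ CW * (1 + c * B) := by
          apply mul_le_mul hb _ h1 hCW
          have := mul_le_mul_of_nonneg_left hz.2 hc0; linarith
  have hint3 : Integrable (fun ω => W ω * (1 + c * μZ ω)) P := by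
    apply myIntegrableOfBound (hWm0.mul (aestronglyMeasurable_const.add
      (aestronglyMeasurable_const.mul hμm))) (CW * (1 + c * B))
    filter_upwards [hW0, hWb, hμ0, hμB] with ω h0 hb hm0 hmB
    have h1 : (0:ℝ) ≤ 1 + c * μZ ω := by
      have := mul_nonneg hc0 hm0; linarith
    calc ‖W ω * (1 + c * μZ ω)‖ = W ω * (1 + c * μZ ω) := by
          rw [Real.norm_eq_abs, abs_of_nonneg (mul_nonneg h0 h1)]
      _ ≤ CW * (1 + c * B) := by
          apply mul_le_mul hb _ h1 hCW
          have := mul_le_mul_of_nonneg_left hmB hc0; linarith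
  -- step 1: exp ≤ linear
  have step1 : ∫ ω, W ω * Real.exp (lam * Z ω) ∂P
      ≤ ∫ ω, W ω * (1 + c * Z ω) ∂P := by
    apply integral_mono_ae hint1 hint2
    filter_upwards [hW0, hZ01] with ω h0 hz
    exact mul_le_mul_of_nonneg_left (myChord hB hz.1 hz.2) h0
  -- step 2: replace Z by its conditional expectation
  have hWZint : Integrable (W * Z) P := by
    have : W * Z = fun ω => W ω * Z ω := rfl
    rw [this]; exact hintWZ
  have pullout : P[W * Z|m] =ᵐ[P] W * μZ :=
    condExp_mul_of_stronglyMeasurable_left hW hWZint hZint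
  have step2 : ∫ ω, W ω * Z ω ∂P = ∫ ω, W ω * μZ ω ∂P := by
    calc ∫ ω, W ω * Z ω ∂P = ∫ ω, (P[W * Z|m]) ω ∂P :=
          (integral_condExp hm).symm
      _ = ∫ ω, W ω * μZ ω ∂P := integral_congr_ae pullout
  have step2' : ∫ ω, W ω * (1 + c * Z ω) ∂P = ∫ ω, W ω * (1 + c * μZ ω) ∂P := by
    have e1 : ∀ (g : Ω → ℝ), (fun ω => W ω * (1 + c * g ω))
        = fun ω => W ω + c * (W ω * g ω) := by intro g; funext ω; ring
    rw [e1 Z, e1 μZ, integral_add hWint (hintWZ.const_mul c),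
      integral_add hWint (hintWμ.const_mul c), integral_const_mul, integral_const_mul,
      step2]
  -- step 3: 1 + x ≤ exp x
  have step3 : ∫ ω, W ω * (1 + c * μZ ω) ∂P
      ≤ ∫ ω, W ω * Real.exp (c * μZ ω) ∂P := by
    apply integral_mono_ae hint3 hint4
    filter_upwards [hW0] with ω h0
    exact mul_le_mul_of_nonneg_left (by linarith [Real.add_one_le_exp (c * μZ ω)]) h0
  calc ∫ ω, W ω * Real.exp (lam * Z ω) ∂P ≤ ∫ ω, W ω * (1 + c * Z ω) ∂P := step1
    _ = ∫ ω, W ω * (1 + c * μZ ω) ∂P := step2'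
    _ ≤ ∫ ω, W ω * Real.exp (c * μZ ω) ∂P := step3

/-- Let `(Ω, F, P)` be a probability space equipped with a filtration
`(F_k)_{k=0}^{K}`, and let `Z_1, …, Z_K` be random variables such that each
`Z_k` is `F_k`-measurable and satisfies `0 ≤ Z_k ≤ B` almost surely, for a
constant `B ≥ 1`.  Let `δ ∈ (0,1)` and let `R` be a constant with
`R ≥ (4/9)·ln(1/δ)` such that `Σ_{k=1}^{K} E[Z_k | F_{k−1}] ≤ R` almost
surely.  Then `P( Σ_{k=1}^{K} Z_k > R + 2B·√(R·ln(1/δ)) ) ≤ δ`. -/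
theorem stmt_12 {Ω : Type*} {m0 : MeasurableSpace Ω} (P : Measure Ω)
    [IsProbabilityMeasure P] (K : ℕ) (F : Filtration ℕ m0)
    (Z : ℕ → Ω → ℝ) (B : ℝ) (hB : 1 ≤ B)
    (hmeas : ∀ k, 1 ≤ k → k ≤ K → StronglyMeasurable[F k] (Z k))
    (hbound : ∀ k, 1 ≤ k → k ≤ K → ∀ᵐ ω ∂P, 0 ≤ Z k ω ∧ Z k ω ≤ B)
    (δ : ℝ) (hδ0 : 0 < δ) (hδ1 : δ < 1)
    (R : ℝ) (hR : (4 / 9) * Real.log (1 / δ) ≤ R)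
    (hcond : ∀ᵐ ω ∂P, ∑ k ∈ Finset.Icc 1 K, (P[Z k|F (k - 1)]) ω ≤ R) :
    P {ω | R + 2 * B * Real.sqrt (R * Real.log (1 / δ)) <
        ∑ k ∈ Finset.Icc 1 K, Z k ω} ≤ ENNReal.ofReal δ := by
  classical
  set L : ℝ := Real.log (1 / δ) with hLdef
  have hL : 0 < L := Real.log_pos (one_lt_one_div hδ0 hδ1)
  have hR0 : 0 < R := lt_of_lt_of_le (by positivity) hR
  have hB0 : (0 : ℝ) < B := lt_of_lt_of_le one_pos hB
  set lam : ℝ := Real.sqrt (L / R) / B with hlamdef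
  have hlam : 0 < lam := div_pos (Real.sqrt_pos.2 (div_pos hL hR0)) hB0
  set c : ℝ := (Real.exp (lam * B) - 1) / B with hcdef
  have hc0 : 0 ≤ c := by
    have h1 := Real.add_one_le_exp (lam * B)
    have h2 : 0 ≤ lam * B := mul_nonneg hlam.le hB0.le
    apply div_nonneg _ hB0.le; linarith
  set μ : ℕ → Ω → ℝ := fun k => P[Z k|F (k - 1)] with hμdef
  -- a.e. facts on Z and μ
  have haeZ : ∀ᵐ ω ∂P, ∀ k ∈ Finset.Icc 1 K, 0 ≤ Z k ω ∧ Z k ω ≤ B := by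
    rw [Filter.eventually_all_finset]
    intro k hk
    rw [Finset.mem_Icc] at hk
    exact hbound k hk.1 hk.2
  have hZm0 : ∀ k, 1 ≤ k → k ≤ K → AEStronglyMeasurable (Z k) P := fun k h1 h2 =>
    ((hmeas k h1 h2).mono (F.le k)).aestronglyMeasurable
  have hZint : ∀ k, 1 ≤ k → k ≤ K → Integrable (Z k) P := by
    intro k h1 h2
    apply myIntegrableOfBound (hZm0 k h1 h2) B
    filter_upwards [hbound k h1 h2] with ω h
    rw [Real.norm_eq_abs, abs_le]; constructor <;> linarith [h.1, h.2]
  have hμfact : ∀ k, 1 ≤ k → k ≤ K → ∀ᵐ ω ∂P, 0 ≤ μ k ω ∧ μ k ω ≤ B := by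
    intro k h1 h2
    have hn : 0 ≤ᵐ[P] μ k :=
      condExp_nonneg (by filter_upwards [hbound k h1 h2] with ω h using h.1)
    have hub : μ k ≤ᵐ[P] P[fun _ => B|F (k - 1)] :=
      condExp_mono (hZint k h1 h2) (integrable_const B)
        (by filter_upwards [hbound k h1 h2] with ω h using h.2)
    have hcst := condExp_const (μ := P) (F.le (k - 1)) B
    filter_upwards [hn, hub] with ω ha hb
    refine ⟨ha, hb.trans ?_⟩
    rw [hcst]
  have haeμ : ∀ᵐ ω ∂P, ∀ k ∈ Finset.Icc 1 K, 0 ≤ μ k ω ∧ μ k ω ≤ B := by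
    rw [Filter.eventually_all_finset]
    intro k hk
    rw [Finset.mem_Icc] at hk
    exact hμfact k hk.1 hk.2
  -- the exponential supermartingale
  set A : ℕ → Ω → ℝ :=
    fun n ω => Real.exp (∑ k ∈ Finset.Icc 1 n, (lam * Z k ω - c * μ k ω)) with hAdef
  have hAmeas : ∀ n, n ≤ K → StronglyMeasurable[F n] (A n) := by
    intro n hn
    apply Real.continuous_exp.comp_stronglyMeasurable
    apply Finset.stronglyMeasurable_fun_sum
    intro k hk
    rw [Finset.mem_Icc] at hk
    have h1 : StronglyMeasurable[F n] (Z k) :=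
      (hmeas k hk.1 (hk.2.trans hn)).mono (F.mono hk.2)
    have h2 : StronglyMeasurable[F n] (μ k) :=
      stronglyMeasurable_condExp.mono (F.mono ((Nat.sub_le k 1).trans hk.2))
    exact (stronglyMeasurable_const.mul h1).sub (stronglyMeasurable_const.mul h2)
  have hApos : ∀ n ω, 0 < A n ω := fun n ω => Real.exp_pos _
  have hAbound : ∀ n, n ≤ K → ∀ᵐ ω ∂P, A n ω ≤ Real.exp (n * (lam * B)) := by
    intro n hn
    filter_upwards [haeZ, haeμ] with ω hZω hμω
    rw [hAdef]
    simp only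
    rw [Real.exp_le_exp]
    have hcard : (Finset.Icc 1 n).card = n := by
      rw [Nat.card_Icc]; omega
    calc ∑ k ∈ Finset.Icc 1 n, (lam * Z k ω - c * μ k ω)
        ≤ (Finset.Icc 1 n).card • (lam * B) := by
          apply Finset.sum_le_card_nsmul
          intro k hk
          rw [Finset.mem_Icc] at hk
          have hkK : k ∈ Finset.Icc 1 K := Finset.mem_Icc.2 ⟨hk.1, hk.2.trans hn⟩
          have h1 := hZω k hkK
          have h2 := hμω k hkK
          have := mul_nonneg hc0 h2.1
          have := mul_le_mul_of_nonneg_left h1.2 hlam.le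
          linarith
      _ = n * (lam * B) := by rw [hcard, nsmul_eq_mul]
  have hAint : ∀ n, n ≤ K → Integrable (A n) P := by
    intro n hn
    apply myIntegrableOfBound ((hAmeas n hn).mono (F.le n)).aestronglyMeasurable
      (Real.exp (n * (lam * B)))
    filter_upwards [hAbound n hn] with ω h
    rw [Real.norm_eq_abs, abs_of_pos (hApos n ω)]; exact h
  -- induction: E[A n] ≤ 1
  have hInd : ∀ n, n ≤ K → ∫ ω, A n ω ∂P ≤ 1 := by
    intro n
    induction n with
    | zero =>
      intro _
      have : A 0 = fun _ => 1 := by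
        funext ω; rw [hAdef]; simp
      rw [this]
      simp
    | succ n ih =>
      intro hn1
      have hn : n ≤ K := by omega
      set W : Ω → ℝ := fun ω => A n ω * Real.exp (-(c * μ (n + 1) ω)) with hWdef
      have hdecomp : ∀ ω, A (n + 1) ω = W ω * Real.exp (lam * Z (n + 1) ω) := by
        intro ω
        have h1 : A (n + 1) ω = Real.exp ((∑ k ∈ Finset.Icc 1 n,
            (lam * Z k ω - c * μ k ω)) + (lam * Z (n + 1) ω - c * μ (n + 1) ω)) := by
          rw [hAdef]
          simp only
          rw [Finset.sum_Icc_succ_top (Nat.le_add_left 1 n)]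
        rw [h1, hWdef, hAdef]
        simp only
        rw [← Real.exp_add, ← Real.exp_add]
        congr 1
        ring
      have hWmeas : StronglyMeasurable[F n] W := by
        apply (hAmeas n hn).mul
        apply Real.continuous_exp.comp_stronglyMeasurable
        have : StronglyMeasurable[F n] (μ (n + 1)) := by
          have : F (n + 1 - 1) = F n := by norm_num
          exact stronglyMeasurable_condExp.mono (le_of_eq this)
        exact (stronglyMeasurable_const.mul this).neg
      have hW0 : 0 ≤ᵐ[P] W :=
        Filter.Eventually.of_forall fun ω =>
          mul_nonneg (hApos n ω).le (Real.exp_pos _).le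
      have hWb : ∀ᵐ ω ∂P, W ω ≤ Real.exp (n * (lam * B)) := by
        filter_upwards [hAbound n hn, hμfact (n + 1) (by omega) hn1] with ω h1 h2
        rw [hWdef]
        simp only
        calc A n ω * Real.exp (-(c * μ (n + 1) ω))
            ≤ A n ω * 1 := by
              apply mul_le_mul_of_nonneg_left _ (hApos n ω).le
              rw [← Real.exp_zero, Real.exp_le_exp]
              have := mul_nonneg hc0 h2.1
              linarith
          _ = A n ω := mul_one _
          _ ≤ _ := h1
      have hstep := myStep P (F.le n) hWmeas (Real.exp_pos (n * (lam * B))).le hW0 hWb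
        (hZm0 (n + 1) (by omega) hn1) hB0 hlam.le (hbound (n + 1) (by omega) hn1)
      have hμeq : P[Z (n + 1)|F n] = μ (n + 1) := rfl
      calc ∫ ω, A (n + 1) ω ∂P
          = ∫ ω, W ω * Real.exp (lam * Z (n + 1) ω) ∂P := by
            apply integral_congr_ae
            exact Filter.Eventually.of_forall fun ω => hdecomp ω
        _ ≤ ∫ ω, W ω * Real.exp (c * (P[Z (n + 1)|F n]) ω) ∂P := hstep
        _ = ∫ ω, A n ω ∂P := by
            apply integral_congr_ae
            apply Filter.Eventually.of_forall
            intro ω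
            rw [hμeq, hWdef]
            simp only
            rw [mul_assoc, ← Real.exp_add, neg_add_cancel, Real.exp_zero, mul_one]
        _ ≤ 1 := ih hn
  -- the moment bound
  set f : Ω → ℝ := fun ω => Real.exp (lam * ∑ k ∈ Finset.Icc 1 K, Z k ω) with hfdef
  have hfeq : ∀ ω, f ω = A K ω * Real.exp (c * ∑ k ∈ Finset.Icc 1 K, μ k ω) := by
    intro ω
    rw [hfdef, hAdef]
    simp only
    rw [← Real.exp_add]
    congr 1
    rw [Finset.sum_sub_distrib, ← Finset.mul_sum, ← Finset.mul_sum]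
    ring
  have hfint : Integrable f P := by
    apply myIntegrableOfBound _ (Real.exp (lam * (K * B)))
    · filter_upwards [haeZ] with ω h
      rw [Real.norm_eq_abs, abs_of_pos (Real.exp_pos _), Real.exp_le_exp]
      apply mul_le_mul_of_nonneg_left _ hlam.le
      have hcard : (Finset.Icc 1 K).card = K := by rw [Nat.card_Icc]; omega
      calc ∑ k ∈ Finset.Icc 1 K, Z k ω ≤ (Finset.Icc 1 K).card • B := by
            apply Finset.sum_le_card_nsmul
            intro k hk; exact (h k hk).2
        _ = K * B := by rw [hcard, nsmul_eq_mul]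
    · apply (Real.continuous_exp.comp_stronglyMeasurable _).aestronglyMeasurable
      apply StronglyMeasurable.const_mul
      apply Finset.stronglyMeasurable_fun_sum
      intro k hk
      rw [Finset.mem_Icc] at hk
      exact (hmeas k hk.1 hk.2).mono (F.le k)
  have hintmoment : ∫ ω, f ω ∂P ≤ Real.exp (c * R) := by
    have h1 : ∫ ω, f ω ∂P ≤ ∫ ω, A K ω * Real.exp (c * R) ∂P := by
      apply integral_mono_ae hfint ((hAint K le_rfl).mul_const _)
      filter_upwards [hcond] with ω hω
      rw [hfeq ω]
      exact mul_le_mul_of_nonneg_left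
        (Real.exp_le_exp.2 (mul_le_mul_of_nonneg_left hω hc0)) (hApos K ω).le
    calc ∫ ω, f ω ∂P ≤ ∫ ω, A K ω * Real.exp (c * R) ∂P := h1
      _ = (∫ ω, A K ω ∂P) * Real.exp (c * R) := integral_mul_const _ _
      _ ≤ 1 * Real.exp (c * R) :=
          mul_le_mul_of_nonneg_right (hInd K le_rfl) (Real.exp_pos _).le
      _ = Real.exp (c * R) := one_mul _
  -- Markov's inequality
  set t : ℝ := R + 2 * B * Real.sqrt (R * L) with htdef
  have hsub : {ω | t < ∑ k ∈ Finset.Icc 1 K, Z k ω}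
      ⊆ {ω | Real.exp (lam * t) ≤ f ω} := by
    intro ω hω
    simp only [Set.mem_setOf_eq] at hω ⊢
    rw [hfdef]
    simp only
    rw [Real.exp_le_exp]
    exact mul_le_mul_of_nonneg_left hω.le hlam.le
  have hmark := mul_meas_ge_le_integral_of_nonneg
    (Filter.Eventually.of_forall fun ω => (Real.exp_pos _).le : 0 ≤ᵐ[P] f)
    hfint (Real.exp (lam * t))
  -- the arithmetic
  have hexpbound : Real.exp (c * R - lam * t) ≤ δ := by
    have hx : lam * B = Real.sqrt (L / R) := by
      rw [hlamdef, div_mul_cancel₀ _ hB0.ne']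
    have hx0 : 0 ≤ Real.sqrt (L / R) := Real.sqrt_nonneg _
    have hx32 : Real.sqrt (L / R) ≤ 3 / 2 := by
      rw [show (3:ℝ)/2 = Real.sqrt ((3/2)^2) by rw [Real.sqrt_sq]; norm_num]
      apply Real.sqrt_le_sqrt
      rw [div_le_iff₀ hR0]
      nlinarith
    have hxsq : Real.sqrt (L / R) ^ 2 = L / R :=
      Real.sq_sqrt (div_nonneg hL.le hR0.le)
    have hce : c ≤ lam + lam ^ 2 * B := by
      rw [hcdef, div_le_iff₀ hB0]
      have h1 := myExpQuad (mul_nonneg hlam.le hB0.le) (hx ▸ hx32)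
      have h2 : (lam + lam ^ 2 * B) * B = lam * B + (lam * B) ^ 2 := by ring
      rw [h2]
      linarith
    have hl2 : lam ^ 2 * B * R = L / B := by
      rw [hlamdef, div_pow, hxsq]
      field_simp
    have hl3 : lam * (2 * B * Real.sqrt (R * L)) = 2 * L := by
      have hsq : Real.sqrt (L / R) * Real.sqrt (R * L) = L := by
        rw [← Real.sqrt_mul (div_nonneg hL.le hR0.le)]
        rw [show L / R * (R * L) = L ^ 2 by field_simp]
        rw [Real.sqrt_sq hL.le]
      have h2 : lam * (2 * B * Real.sqrt (R * L))
          = 2 * (Real.sqrt (L / R) * Real.sqrt (R * L)) := by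
        rw [hlamdef]
        field_simp
      rw [h2, hsq]
    have hLB : L / B ≤ L := div_le_self hL.le hB
    have hexp : c * R - lam * t ≤ -L := by
      have h1 : c * R ≤ lam * R + lam ^ 2 * B * R :=
        (mul_le_mul_of_nonneg_right hce hR0.le).trans_eq (by ring)
      have h2 : lam * t = lam * R + lam * (2 * B * Real.sqrt (R * L)) := by
        rw [htdef]; ring
      rw [h2]
      rw [hl2] at h1
      rw [hl3]
      linarith
    calc Real.exp (c * R - lam * t) ≤ Real.exp (-L) := Real.exp_le_exp.2 hexp
      _ = δ := by
        rw [hLdef, one_div, Real.log_inv, neg_neg, Real.exp_log hδ0]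
  -- putting it together
  have htoReal : (P {ω | t < ∑ k ∈ Finset.Icc 1 K, Z k ω}).toReal ≤ δ := by
    have h1 : (P {ω | t < ∑ k ∈ Finset.Icc 1 K, Z k ω}).toReal
        ≤ (P {ω | Real.exp (lam * t) ≤ f ω}).toReal :=
      ENNReal.toReal_mono (measure_ne_top P _) (measure_mono hsub)
    have h2 : (P {ω | Real.exp (lam * t) ≤ f ω}).toReal
        ≤ Real.exp (c * R) / Real.exp (lam * t) := by
      rw [le_div_iff₀ (Real.exp_pos _)]
      calc (P {ω | Real.exp (lam * t) ≤ f ω}).toReal * Real.exp (lam * t)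
          = Real.exp (lam * t) * (P {ω | Real.exp (lam * t) ≤ f ω}).toReal := by ring
        _ ≤ ∫ ω, f ω ∂P := hmark
        _ ≤ Real.exp (c * R) := hintmoment
    have h3 : Real.exp (c * R) / Real.exp (lam * t) = Real.exp (c * R - lam * t) :=
      (Real.exp_sub _ _).symm
    linarith [h1.trans (h2.trans_eq h3), hexpbound]
  calc P {ω | t < ∑ k ∈ Finset.Icc 1 K, Z k ω}
      = ENNReal.ofReal (P {ω | t < ∑ k ∈ Finset.Icc 1 K, Z k ω}).toReal :=
        (ENNReal.ofReal_toReal (measure_ne_top P _)).symm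
    _ ≤ ENNReal.ofReal δ := ENNReal.ofReal_le_ofReal htoReal
end
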